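/- Let n ≥ p ≥ 1 and let J₁,…,J_p : [0,1] → ℝⁿ be differentiable curves such that (J₁(t),…,J_p(t)) are linearly independent for every t ∈ [0,1] and (J₁(0),…,J_p(0)) = (e₁,…,e_p) is an orthonormal family. Set Σ_t := span{J₁(t),…,J_p(t)}, let B(t) : Σ₀ → Σ_t be the linear map determined by B(t)e_i = J_i(t), and define U(t) : Σ_t → ℝⁿ by U(t) := B'(t)∘B(t)⁻¹, where B'(t) is the linear map with B'(t)e_i = J_i'(t). Let E₁,…,E_p : [0,1] → ℝⁿ be differentiable curves with E_i(t) ∈ Σ_t for all t, E_i(0) = e_i, and such that the orthogonal projection of E_i'(t) onto Σ_t vanishes for every t ∈ [0,1]. Then for every i ∈ {1,…,p} and every t ∈ [0,1], E_i'(t) = (U(t)E_i(t))^⊥, the orthogonal projection of U(t)E_i(t) onto the orthogonal complement of Σ_t in ℝⁿ. -/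

import Mathlib

open Set
open scoped RealInnerProductSpace Matrix

/-- Determinant of a matrix of differentiable functions is differentiable. -/
lemma diffWithinAt_det {p : ℕ} {M : ℝ → Matrix (Fin p) (Fin p) ℝ} {s : Set ℝ} {x : ℝ}
    (hM : ∀ j k, DifferentiableWithinAt ℝ (fun u => M u j k) s x) :
    DifferentiableWithinAt ℝ (fun u => (M u).det) s x := by
  simp only [Matrix.det_apply']
  exact DifferentiableWithinAt.fun_sum fun σ _ =>
    ((DifferentiableWithinAt.fun_finsetProd fun k _ => hM (σ k) k).const_mul _)

/-- Adjugate entries of a matrix of differentiable functions are differentiable. -/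
lemma diffWithinAt_adjugate {p : ℕ} {M : ℝ → Matrix (Fin p) (Fin p) ℝ} {s : Set ℝ} {x : ℝ}
    (hM : ∀ j k, DifferentiableWithinAt ℝ (fun u => M u j k) s x) (j k : Fin p) :
    DifferentiableWithinAt ℝ (fun u => (M u).adjugate j k) s x := by
  simp only [Matrix.adjugate_apply]
  apply diffWithinAt_det
  intro a b
  simp only [Matrix.updateRow_apply]
  by_cases h : a = k
  · simp [h]; exact differentiableWithinAt_const _
  · simp [h]; exact hM a b

/-- **Derivative of the adapted frame equals the normal part of the Jacobi operator.**
Given linearly independent differentiable curves `J₁, …, J_p : [0,1] → ℝⁿ` (Jacobi fields),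
with `Σ_t := span{J₁(t), …, J_p(t)}`, and an adapted frame `E₁, …, E_p` with `Eᵢ(t) ∈ Σ_t`,
`Eᵢ(0) = Jᵢ(0)` and tangential part of `Eᵢ'(t)` vanishing, for every representation
`Eᵢ(t) = ∑ⱼ cⱼ • Jⱼ(t)` (so that `U(t)Eᵢ(t) = ∑ⱼ cⱼ • Jⱼ'(t)`, where `U(t) = B'(t)∘B(t)⁻¹`
with `B(t)eᵢ = Jᵢ(t)`) one has `Eᵢ'(t) = (U(t)Eᵢ(t))^⊥`, the projection onto the orthogonal
complement of `Σ_t`. -/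
theorem frame_derivative_eq_normal_part {n p : ℕ} (hp : 1 ≤ p) (hpn : p ≤ n)
    (J J' E E' : Fin p → ℝ → EuclideanSpace ℝ (Fin n))
    (hJ : ∀ i, ∀ t ∈ Icc (0:ℝ) 1, HasDerivWithinAt (J i) (J' i t) (Icc 0 1) t)
    (hli : ∀ t ∈ Icc (0:ℝ) 1, LinearIndependent ℝ (fun i => J i t))
    (h0 : Orthonormal ℝ (fun i => J i 0))
    (hE : ∀ i, ∀ t ∈ Icc (0:ℝ) 1, HasDerivWithinAt (E i) (E' i t) (Icc 0 1) t)
    (hEmem : ∀ i, ∀ t ∈ Icc (0:ℝ) 1,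
      E i t ∈ Submodule.span ℝ (Set.range fun j => J j t))
    (hE0 : ∀ i, E i 0 = J i 0)
    (hproj : ∀ i, ∀ t ∈ Icc (0:ℝ) 1,
      Submodule.orthogonalProjectionOnto (Submodule.span ℝ (Set.range fun j => J j t)) (E' i t) = 0) :
    ∀ i, ∀ t ∈ Icc (0:ℝ) 1, ∀ c : Fin p → ℝ, E i t = ∑ j, c j • J j t →
      E' i t =
        (Submodule.orthogonalProjectionOnto (Submodule.span ℝ (Set.range fun j => J j t))ᗮ
          (∑ j, c j • J' j t) : EuclideanSpace ℝ (Fin n)) := by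
  intro i t ht c hc
  classical
  -- Gram matrix and coefficient recovery
  set G : ℝ → Matrix (Fin p) (Fin p) ℝ :=
    fun s => Matrix.of fun j k => ⟪J j s, J k s⟫ with hG
  set b : ℝ → (Fin p → ℝ) := fun s j => ⟪J j s, E i s⟫ with hb
  -- the Gram determinant is nonzero on [0,1]
  have hdet : ∀ s ∈ Icc (0:ℝ) 1, (G s).det ≠ 0 := by
    intro s hs hdet0
    obtain ⟨v, hv0, hv⟩ := (Matrix.exists_mulVec_eq_zero_iff).2 hdet0
    set w : EuclideanSpace ℝ (Fin n) := ∑ k, v k • J k s with hw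
    have hjw : ∀ j, ⟪J j s, w⟫ = 0 := by
      intro j
      have h1 := congrFun hv j
      simp only [Matrix.mulVec, dotProduct, hG, Matrix.of_apply, Pi.zero_apply] at h1
      rw [hw, inner_sum, ← h1]
      exact Finset.sum_congr rfl fun k _ => by rw [real_inner_smul_right, mul_comm]
    have hww : ⟪w, w⟫ = 0 := by
      nth_rewrite 1 [hw]
      rw [sum_inner]
      exact Finset.sum_eq_zero fun k _ => by rw [real_inner_smul_left, hjw k, mul_zero]
    have hwz : w = 0 := inner_self_eq_zero.mp hww
    have := (Fintype.linearIndependent_iff.1 (hli s hs)) v (by rw [← hw]; exact hwz)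
    exact hv0 (funext this)
  -- the Gram system determines coefficients
  have hkey : ∀ s ∈ Icc (0:ℝ) 1, ∀ a : Fin p → ℝ,
      E i s = ∑ k, a k • J k s → G s *ᵥ a = b s := by
    intro s hs a ha
    funext j
    simp only [Matrix.mulVec, dotProduct, hG, Matrix.of_apply, hb]
    rw [ha, inner_sum]
    exact Finset.sum_congr rfl fun k _ => by rw [real_inner_smul_right, mul_comm]
  set d : ℝ → Fin p → ℝ := fun s => (G s)⁻¹ *ᵥ b s with hd
  have hda : ∀ s ∈ Icc (0:ℝ) 1, ∀ a : Fin p → ℝ,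
      E i s = ∑ k, a k • J k s → d s = a := by
    intro s hs a ha
    rw [hd]
    simp only
    rw [← hkey s hs a ha, Matrix.mulVec_mulVec,
      Matrix.nonsing_inv_mul _ (isUnit_iff_ne_zero.2 (hdet s hs)), Matrix.one_mulVec]
  have hEd : ∀ s ∈ Icc (0:ℝ) 1, E i s = ∑ k, d s k • J k s := by
    intro s hs
    obtain ⟨a, ha⟩ := (Submodule.mem_span_range_iff_exists_fun ℝ).1 (hEmem i s hs)
    rw [hda s hs a ha.symm, ha]
  have hdt : d t = c := hda t ht c hc
  -- differentiability of the coefficients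
  have hGdiff : ∀ j k, DifferentiableWithinAt ℝ (fun s => G s j k) (Icc 0 1) t := by
    intro j k
    exact ((hJ j t ht).inner ℝ (hJ k t ht)).differentiableWithinAt
  have hbdiff : ∀ k, DifferentiableWithinAt ℝ (fun s => b s k) (Icc 0 1) t := by
    intro k
    exact ((hJ k t ht).inner ℝ (hE i t ht)).differentiableWithinAt
  have hddiff : ∀ j, DifferentiableWithinAt ℝ (fun s => d s j) (Icc 0 1) t := by
    intro j
    have hrep : (fun s => d s j) =
        fun s => ∑ k, ((G s).det⁻¹ * (G s).adjugate j k) * b s k := by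
      funext s
      simp only [hd, Matrix.inv_def, Ring.inverse_eq_inv', Matrix.mulVec, dotProduct,
        Matrix.smul_apply, smul_eq_mul]
    rw [hrep]
    refine DifferentiableWithinAt.fun_sum fun k _ => ?_
    exact (((diffWithinAt_det hGdiff).inv (hdet t ht)).mul
      (diffWithinAt_adjugate hGdiff j k)).mul (hbdiff k)
  set d' : Fin p → ℝ := fun j => derivWithin (fun s => d s j) (Icc 0 1) t with hd'
  have hdd : ∀ j, HasDerivWithinAt (fun s => d s j) (d' j) (Icc 0 1) t :=
    fun j => (hddiff j).hasDerivWithinAt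
  -- derivative of the representation
  have hgder : HasDerivWithinAt (fun s => ∑ k, d s k • J k s)
      (∑ k, (d t k • J' k t + d' k • J k t)) (Icc 0 1) t :=
    HasDerivWithinAt.fun_sum fun k _ => (hdd k).smul (hJ k t ht)
  have hEder : HasDerivWithinAt (E i)
      (∑ k, (d t k • J' k t + d' k • J k t)) (Icc 0 1) t :=
    hgder.congr (fun s hs => (hEd s hs)) (hEd t ht)
  have hud : UniqueDiffWithinAt ℝ (Icc (0:ℝ) 1) t :=
    (uniqueDiffOn_Icc one_pos) t ht
  have hE'eq : E' i t = ∑ k, (d t k • J' k t + d' k • J k t) := by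
    rw [← (hE i t ht).derivWithin hud, (hEder).derivWithin hud]
  -- finish by projecting
  set K : Submodule ℝ (EuclideanSpace ℝ (Fin n)) :=
    Submodule.span ℝ (Set.range fun j => J j t) with hK
  haveI : FiniteDimensional ℝ K :=
    FiniteDimensional.span_of_finite ℝ (Set.finite_range _)
  have hsplit := Submodule.starProjection_add_starProjection_orthogonal (K := K) (E' i t)
  rw [Submodule.starProjection_apply, Submodule.starProjection_apply, hproj i t ht] at hsplit
  simp only [ZeroMemClass.coe_zero, zero_add] at hsplit
  rw [← hsplit]
  congr 1
  have hmem : E' i t - ∑ j, c j • J' j t ∈ K := by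
    rw [hE'eq, hdt, Finset.sum_add_distrib, add_sub_cancel_left]
    exact Submodule.sum_smul_mem K d' fun j _ =>
      Submodule.subset_span ⟨j, rfl⟩
  have := Submodule.orthogonalProjectionOnto_orthogonal_apply_eq_zero hmem
  rw [map_sub] at this
  exact (sub_eq_zero.mp this)
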